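/- Given an admissible inductive system (E_n, T_n) over C*-algebras (C_n), the set Z (the norm closure of ∪_n Z_n in L = ℓ∞({C_n})) is a closed self-adjoint subalgebra of L (i.e. a C*-subalgebra: it is a closed linear subspace, closed under multiplication, and closed under the star operation), and it contains the ideal c₀({C_n}). -/

import Mathlib

open Filter ENNReal

noncomputable section

variable {C : ℕ → Type*} [∀ n, NonUnitalNormedRing (C n)] [∀ n, StarRing (C n)]
  [∀ n, CStarRing (C n)] [∀ n, NormedSpace ℂ (C n)] [∀ n, StarModule ℂ (C n)]
  [∀ n, IsScalarTower ℂ (C n) (C n)] [∀ n, SMulCommClass ℂ (C n) (C n)]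
  [∀ n, CompleteSpace (C n)]

/-- `ψ : E → D` (with range inside `F ⊆ D`) is an `ε`-morphism: bounded with norm at most
`1 + ε`, approximately multiplicative with defect `ε`, and self-adjoint. -/
def IsEpsMorphism {A D : Type*} [NonUnitalNormedRing A] [StarRing A] [NormedSpace ℂ A]
    [NonUnitalNormedRing D] [StarRing D] [NormedSpace ℂ D]
    (E : Submodule ℂ A) (F : Submodule ℂ D) (ψ : E →ₗ[ℂ] D) (ε : ℝ) : Prop :=
  (∀ x : E, ψ x ∈ F) ∧
  (∀ x : E, ‖ψ x‖ ≤ (1 + ε) * ‖(x : A)‖) ∧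
  (∀ (x y : E) (h : (x : A) * (y : A) ∈ E),
      ‖ψ ⟨(x : A) * (y : A), h⟩ - ψ x * ψ y‖ ≤ ε * ‖(x : A)‖ * ‖(y : A)‖) ∧
  (∀ (x : E) (h : star (x : A) ∈ E), ψ ⟨star (x : A), h⟩ = star (ψ x))

/-- An admissible inductive system: `E n ⊆ C n` are finite-dimensional self-adjoint subspaces,
`T n : E n → E (n+1)` (the paper's `T_{n+1}`) is an `ε (n+1)`-morphism with
`T n (E n) · T n (E n) ⊆ E (n+1)`, the `ε k` (`k ≥ 1`) are positive with `∑_{k≥1} ε k ≤ 1`. -/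
def IsAdmissibleSystem (E : ∀ n, Submodule ℂ (C n)) (T : ∀ n, E n →ₗ[ℂ] E (n + 1))
    (ε : ℕ → ℝ) : Prop :=
  (∀ k, 1 ≤ k → 0 < ε k) ∧
  (∀ N, ∑ k ∈ Finset.Icc 1 N, ε k ≤ 1) ∧
  (∀ n, FiniteDimensional ℂ (E n)) ∧
  (∀ n, ∀ x ∈ E n, star x ∈ E n) ∧
  (∀ n, IsEpsMorphism (E n) (E (n + 1)) ((E (n + 1)).subtype.comp (T n)) (ε (n + 1))) ∧
  (∀ n, ∀ x y : E n, ((T n x : C (n + 1)) * (T n y : C (n + 1))) ∈ E (n + 1))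

/-- The iterated map `Titer E T n x m = T_{[n+m, n+1]}(x) ∈ E (n+m)`
(for `m = 0` this is `x` itself). -/
def Titer (E : ∀ n, Submodule ℂ (C n)) (T : ∀ n, E n →ₗ[ℂ] E (n + 1)) (n : ℕ) (x : E n) :
    ∀ m : ℕ, E (n + m)
  | 0 => x
  | m + 1 => T (n + m) (Titer E T n x m)

/-- `θₙ(x)`: the sequence `(0, …, 0, x, T_{n+1}x, T_{n+2}T_{n+1}x, …)` (with `x` in
position `n`), as an element of `∀ k, C k`. -/
def theta (E : ∀ n, Submodule ℂ (C n)) (T : ∀ n, E n →ₗ[ℂ] E (n + 1)) (n : ℕ) (x : E n) :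
    ∀ k, C k := fun k =>
  if h : n ≤ k then
    cast (congrArg C (Nat.add_sub_cancel' h)) ((Titer E T n x (k - n) : C (n + (k - n))))
  else 0

/-- `Z_n ⊆ L = ℓ∞({C_k})`: the bounded sequences `z` with `z n ∈ E n` and
`z k = T_{[k,n+1]}(z n)` for all `k > n` (coordinates below `n` are arbitrary). -/
def ZSet (E : ∀ n, Submodule ℂ (C n)) (T : ∀ n, E n →ₗ[ℂ] E (n + 1)) (n : ℕ) :
    Set (lp C ∞) :=
  {z | ∃ h : z n ∈ E n, ∀ k, n ≤ k → z k = theta E T n ⟨z n, h⟩ k}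

/-- `Z`: the norm closure of `⋃ n, Z_n` in `L = ℓ∞({C_k})`. -/
def ZAlg (E : ∀ n, Submodule ℂ (C n)) (T : ∀ n, E n →ₗ[ℂ] E (n + 1)) : Set (lp C ∞) :=
  closure (⋃ n, ZSet E T n)

/-- `c₀({C_k}) ⊆ L`: the sequences whose coordinate norms tend to `0`. -/
def c0Set : Set (lp C ∞) := {z | Tendsto (fun k => ‖z k‖) atTop (nhds 0)}

/- ## Auxiliary lemmas -/

section Aux

variable (E : ∀ n, Submodule ℂ (C n)) (T : ∀ n, E n →ₗ[ℂ] E (n + 1))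

lemma titer_heq (n : ℕ) (x : E n) {j m : ℕ} (h : j = m) :
    HEq ((Titer E T n x j : C (n + j))) ((Titer E T n x m : C (n + m))) := by
  subst h; rfl

lemma theta_add (n : ℕ) (x : E n) (m : ℕ) :
    theta E T n x (n + m) = (Titer E T n x m : C (n + m)) := by
  have h : n ≤ n + m := Nat.le_add_right n m
  simp only [theta]
  rw [dif_pos h, cast_eq_iff_heq]
  exact titer_heq E T n x (by omega)

lemma theta_self (n : ℕ) (x : E n) : theta E T n x n = (x : C n) :=
  theta_add E T n x 0

lemma theta_mem (n : ℕ) (x : E n) {k : ℕ} (h : n ≤ k) : theta E T n x k ∈ E k := by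
  obtain ⟨m, rfl⟩ := Nat.exists_eq_add_of_le h
  rw [theta_add]
  exact (Titer E T n x m).2

lemma theta_succ (n : ℕ) (x : E n) {k : ℕ} (h : n ≤ k) :
    theta E T n x (k + 1) = (T k ⟨theta E T n x k, theta_mem E T n x h⟩ : C (k + 1)) := by
  obtain ⟨m, rfl⟩ := Nat.exists_eq_add_of_le h
  calc theta E T n x (n + m + 1) = (Titer E T n x (m + 1) : C (n + (m + 1))) :=
        theta_add E T n x (m + 1)
    _ = (T (n + m) (Titer E T n x m) : C (n + m + 1)) := rfl
    _ = (T (n + m) ⟨theta E T n x (n + m), theta_mem E T n x (Nat.le_add_right n m)⟩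
          : C (n + m + 1)) := by
        rw [show (⟨theta E T n x (n + m), theta_mem E T n x (Nat.le_add_right n m)⟩ : E (n + m))
            = Titer E T n x m from Subtype.ext (theta_add E T n x m)]

lemma Tcoe_congr {k : ℕ} {a b : E k} (h : a = b) :
    ((T k a : E (k + 1)) : C (k + 1)) = ((T k b : E (k + 1)) : C (k + 1)) := by rw [h]

/-- Recursive characterization of membership in `Z_n`. -/
lemma mem_zset_iff {z : lp C ∞} {n : ℕ} :
    z ∈ ZSet E T n ↔ (∀ k, n ≤ k → z k ∈ E k) ∧
      ∀ k, n ≤ k → ∀ hE : z k ∈ E k, z (k + 1) = (T k ⟨z k, hE⟩ : C (k + 1)) := by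
  constructor
  · rintro ⟨hn, hth⟩
    have hmem : ∀ k, n ≤ k → z k ∈ E k := by
      intro k hk
      rw [hth k hk]
      exact theta_mem E T n _ hk
    refine ⟨hmem, fun k hk hE => ?_⟩
    have h1 : z (k + 1) = theta E T n ⟨z n, hn⟩ (k + 1) := hth (k + 1) (hk.trans k.le_succ)
    rw [h1, theta_succ E T n _ hk]
    exact Tcoe_congr E T (Subtype.ext (hth k hk).symm)
  · rintro ⟨hmem, hstep⟩
    refine ⟨hmem n le_rfl, fun k hk => ?_⟩
    obtain ⟨m, rfl⟩ := Nat.exists_eq_add_of_le hk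
    clear hk
    induction m with
    | zero => exact (theta_self E T n ⟨z n, hmem n le_rfl⟩).symm
    | succ m ih =>
      have hnm : n ≤ n + m := Nat.le_add_right n m
      have hgoal : (z (n + m + 1) : C (n + m + 1))
          = theta E T n ⟨z n, hmem n le_rfl⟩ (n + m + 1) := by
        rw [hstep (n + m) hnm (hmem _ hnm), theta_succ E T n _ hnm]
        exact Tcoe_congr E T (Subtype.ext ih)
      exact hgoal

lemma zset_mono {n m : ℕ} (hnm : n ≤ m) : ZSet E T n ⊆ ZSet E T m := by
  intro z hz
  rw [mem_zset_iff] at hz ⊢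
  exact ⟨fun k hk => hz.1 k (hnm.trans hk), fun k hk hE => hz.2 k (hnm.trans hk) hE⟩

lemma zset_zero : (0 : lp C ∞) ∈ ZSet E T 0 := by
  rw [mem_zset_iff]
  have h0 : ∀ k, (0 : lp C ∞) k = 0 := fun k => rfl
  refine ⟨fun k _ => by rw [h0]; exact zero_mem _, fun k _ hE => ?_⟩
  rw [h0 (k + 1), Tcoe_congr E T (show (⟨(0 : lp C ∞) k, hE⟩ : E k) = 0 from
    Subtype.ext (h0 k)), map_zero]
  rfl

lemma zset_add {n : ℕ} {z w : lp C ∞} (hz : z ∈ ZSet E T n) (hw : w ∈ ZSet E T n) :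
    z + w ∈ ZSet E T n := by
  rw [mem_zset_iff] at hz hw ⊢
  have hadd : ∀ k, (z + w) k = z k + w k := fun k => rfl
  refine ⟨fun k hk => by rw [hadd]; exact add_mem (hz.1 k hk) (hw.1 k hk), fun k hk hE => ?_⟩
  calc (z + w) (k + 1) = z (k + 1) + w (k + 1) := rfl
    _ = ((T k ⟨z k, hz.1 k hk⟩ : E (k+1)) : C (k+1)) + ((T k ⟨w k, hw.1 k hk⟩ : E (k+1)) : C (k+1)) := by
        rw [hz.2 k hk (hz.1 k hk), hw.2 k hk (hw.1 k hk)]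
    _ = ((T k (⟨z k, hz.1 k hk⟩ + ⟨w k, hw.1 k hk⟩) : E (k+1)) : C (k+1)) := by
        rw [map_add]; rfl
    _ = ((T k ⟨(z + w) k, hE⟩ : E (k+1)) : C (k+1)) :=
        Tcoe_congr E T (Subtype.ext (hadd k)).symm

lemma zset_smul {n : ℕ} (c : ℂ) {z : lp C ∞} (hz : z ∈ ZSet E T n) :
    c • z ∈ ZSet E T n := by
  rw [mem_zset_iff] at hz ⊢
  have hsmul : ∀ k, (c • z) k = c • z k := fun k => rfl
  refine ⟨fun k hk => by rw [hsmul]; exact Submodule.smul_mem _ c (hz.1 k hk), fun k hk hE => ?_⟩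
  calc (c • z) (k + 1) = c • z (k + 1) := rfl
    _ = c • ((T k ⟨z k, hz.1 k hk⟩ : E (k+1)) : C (k+1)) := by
        rw [hz.2 k hk (hz.1 k hk)]
    _ = ((T k (c • ⟨z k, hz.1 k hk⟩) : E (k+1)) : C (k+1)) := by
        rw [map_smul]; rfl
    _ = ((T k ⟨(c • z) k, hE⟩ : E (k+1)) : C (k+1)) :=
        Tcoe_congr E T (Subtype.ext (hsmul k)).symm

lemma zset_star {n : ℕ} {ε : ℕ → ℝ} (hsa : ∀ m, ∀ x ∈ E m, star x ∈ E m)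
    (hmor : ∀ m, IsEpsMorphism (E m) (E (m + 1)) ((E (m + 1)).subtype.comp (T m)) (ε (m + 1)))
    {z : lp C ∞} (hz : z ∈ ZSet E T n) : star z ∈ ZSet E T n := by
  rw [mem_zset_iff] at hz ⊢
  have hstar : ∀ k, (star z) k = star (z k) := fun k => rfl
  refine ⟨fun k hk => by rw [hstar]; exact hsa k _ (hz.1 k hk), fun k hk hE => ?_⟩
  have hsmem : star (z k) ∈ E k := hsa k _ (hz.1 k hk)
  have hkey := (hmor k).2.2.2 ⟨z k, hz.1 k hk⟩ hsmem
  calc (star z) (k + 1) = star (z (k + 1)) := rfl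
    _ = star ((T k ⟨z k, hz.1 k hk⟩ : E (k+1)) : C (k+1)) := by
        rw [hz.2 k hk (hz.1 k hk)]
    _ = ((T k ⟨star (z k), hsmem⟩ : E (k+1)) : C (k+1)) := hkey.symm
    _ = ((T k ⟨(star z) k, hE⟩ : E (k+1)) : C (k+1)) :=
        Tcoe_congr E T (Subtype.ext (hstar k)).symm

/-- Key approximation: the product of two elements of `Z_n` lies in the closure of `⋃ Z_m`. -/
lemma zset_mul_mem_closure {n : ℕ} {ε : ℕ → ℝ} (hsys : IsAdmissibleSystem E T ε)
    {z w : lp C ∞} (hz : z ∈ ZSet E T n) (hw : w ∈ ZSet E T n) :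
    z * w ∈ closure (⋃ m, ZSet E T m) := by
  obtain ⟨hpos, hsum, -, -, hmor, hmul⟩ := hsys
  rw [mem_zset_iff] at hz hw
  obtain ⟨hzE, hzS⟩ := hz
  obtain ⟨hwE, hwS⟩ := hw
  -- summability of the epsilons
  set ε' : ℕ → ℝ := fun j => ε (j + 1) with hε'
  have hε'nonneg : ∀ j, 0 ≤ ε' j := fun j => (hpos (j + 1) (by omega)).le
  have hε'sum : Summable ε' := by
    apply summable_of_sum_range_le hε'nonneg (c := 1)
    intro N
    have : ∑ i ∈ Finset.range N, ε' i = ∑ k ∈ Finset.Icc 1 N, ε k := by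
      rw [← Finset.Ico_add_one_right_eq_Icc, Finset.sum_Ico_eq_sum_range]
      refine Finset.sum_congr (by norm_num) fun i _ => ?_
      simp only [hε']
      congr 1
      omega
    rw [this]
    exact hsum N
  -- tail sums
  set t : ℕ → ℝ := fun p => ∑' k, ε' (k + p) with ht
  have htnonneg : ∀ p, 0 ≤ t p := fun p => tsum_nonneg fun k => hε'nonneg _
  have htail : ∀ p k : ℕ, ∑ j ∈ Finset.Icc (p + 1) k, ε j ≤ t p := by
    intro p k
    have h1 : ∑ j ∈ Finset.Icc (p + 1) k, ε j
        = ∑ i ∈ Finset.range (k + 1 - (p + 1)), ε' (i + p) := by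
      rw [← Finset.Ico_add_one_right_eq_Icc, Finset.sum_Ico_eq_sum_range]
      refine Finset.sum_congr rfl fun i _ => ?_
      simp only [hε']
      congr 1
      omega
    rw [h1, ht]
    exact Summable.sum_le_tsum _ (fun i _ => hε'nonneg _) ((summable_nat_add_iff p).2 hε'sum)
  have htzero : Tendsto t atTop (nhds 0) := tendsto_sum_nat_add ε'
  -- choose p
  rw [Metric.mem_closure_iff]
  intro δ hδ
  set M : ℝ := ‖z‖ * ‖w‖ with hM
  have hMnonneg : 0 ≤ M := mul_nonneg (norm_nonneg _) (norm_nonneg _)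
  have hlim : Tendsto (fun p => (Real.exp (t p) - 1) * M) atTop (nhds 0) := by
    have h1 : Tendsto (fun p => Real.exp (t p) - 1) atTop (nhds 0) := by
      have := ((Real.continuous_exp.tendsto 0).comp htzero).sub_const 1
      simpa using this
    simpa using h1.mul_const M
  obtain ⟨p, hp1, hp2⟩ := ((eventually_ge_atTop (n + 1)).and
    (hlim.eventually (gt_mem_nhds hδ))).exists
  -- products of coordinates are in E k for k ≥ n+1
  have hzwE : ∀ k, n + 1 ≤ k → z k * w k ∈ E k := by
    intro k hk
    obtain ⟨j, rfl⟩ : ∃ j, k = j + 1 := ⟨k - 1, by omega⟩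
    have hj : n ≤ j := by omega
    rw [hzS j hj (hzE j hj), hwS j hj (hwE j hj)]
    exact hmul j _ _
  set x0 : E p := ⟨z p * w p, hzwE p hp1⟩ with hx0
  -- the approximant
  set u : ∀ k, C k := fun k => if p ≤ k then theta E T p x0 k else z k * w k with hu
  have hnormz : ∀ k, ‖z k‖ ≤ ‖z‖ := fun k => lp.norm_apply_le_norm ENNReal.top_ne_zero z k
  have hnormw : ∀ k, ‖w k‖ ≤ ‖w‖ := fun k => lp.norm_apply_le_norm ENNReal.top_ne_zero w k
  have hnormzw : ∀ k, ‖z k * w k‖ ≤ M := fun k => by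
    calc ‖z k * w k‖ ≤ ‖z k‖ * ‖w k‖ := norm_mul_le _ _
      _ ≤ M := mul_le_mul (hnormz k) (hnormw k) (norm_nonneg _) (norm_nonneg _)
  -- main estimate
  have key : ∀ k, p ≤ k → ‖z k * w k - theta E T p x0 k‖
      ≤ ((∏ j ∈ Finset.Icc (p + 1) k, (1 + ε j)) - 1) * M := by
    intro k hk
    induction k, hk using Nat.le_induction with
    | base =>
      rw [theta_self]
      simp [hx0, Finset.Icc_eq_empty_of_lt (Nat.lt_succ_self p)]
    | succ k hk ih =>
      have hnk : n ≤ k := by omega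
      have hn1k : n + 1 ≤ k := by omega
      have hεk : 0 ≤ ε (k + 1) := (hpos (k + 1) (by omega)).le
      set P : ℝ := ∏ j ∈ Finset.Icc (p + 1) k, (1 + ε j) with hP
      have hPone : 1 ≤ P := by
        rw [hP]
        have h1 := Finset.prod_le_prod (s := Finset.Icc (p + 1) k)
          (f := fun _ => (1 : ℝ)) (g := fun j => 1 + ε j)
          (fun j _ => zero_le_one)
          (fun j hj => by
            have : 0 < ε j := hpos j (by simp at hj; omega)
            show (1 : ℝ) ≤ 1 + ε j
            linarith)
        simpa using h1
      set a : E k := ⟨z k, hzE k hnk⟩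
      set b : E k := ⟨w k, hwE k hnk⟩
      set c : E k := ⟨z k * w k, hzwE k hn1k⟩
      set d : E k := ⟨theta E T p x0 k, theta_mem E T p x0 hk⟩
      have hgoal_lhs : z (k + 1) * w (k + 1) - theta E T p x0 (k + 1)
          = ((T k a : E (k+1)) : C (k+1)) * ((T k b : E (k+1)) : C (k+1))
            - ((T k d : E (k+1)) : C (k+1)) := by
        rw [hzS k hnk (hzE k hnk), hwS k hnk (hwE k hnk), theta_succ E T p x0 hk]
      have h1 : ‖((T k c : E (k+1)) : C (k+1)) -
          ((T k a : E (k+1)) : C (k+1)) * ((T k b : E (k+1)) : C (k+1))‖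
          ≤ ε (k + 1) * ‖z k‖ * ‖w k‖ := by
        have := (hmor k).2.2.1 a b (hzwE k hn1k)
        exact this
      have h2 : ‖((T k c : E (k+1)) : C (k+1)) - ((T k d : E (k+1)) : C (k+1))‖
          ≤ (1 + ε (k + 1)) * ‖z k * w k - theta E T p x0 k‖ := by
        have h3 := (hmor k).2.1 (c - d)
        have h4 : (((E (k+1)).subtype.comp (T k)) (c - d) : C (k+1))
            = ((T k c : E (k+1)) : C (k+1)) - ((T k d : E (k+1)) : C (k+1)) := by
          rw [map_sub]; rfl
        rw [h4] at h3
        have h5 : ((c - d : E k) : C k) = z k * w k - theta E T p x0 k := rfl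
        rw [h5] at h3
        exact h3
      rw [hgoal_lhs]
      calc ‖((T k a : E (k+1)) : C (k+1)) * ((T k b : E (k+1)) : C (k+1))
            - ((T k d : E (k+1)) : C (k+1))‖
          ≤ ‖((T k a : E (k+1)) : C (k+1)) * ((T k b : E (k+1)) : C (k+1))
            - ((T k c : E (k+1)) : C (k+1))‖
            + ‖((T k c : E (k+1)) : C (k+1)) - ((T k d : E (k+1)) : C (k+1))‖ := by
            simpa [dist_eq_norm] using dist_triangle
              (((T k a : E (k+1)) : C (k+1)) * ((T k b : E (k+1)) : C (k+1)))
              ((T k c : E (k+1)) : C (k+1)) ((T k d : E (k+1)) : C (k+1))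
        _ ≤ ε (k + 1) * M + (1 + ε (k + 1)) * ((P - 1) * M) := by
            apply add_le_add
            · rw [norm_sub_rev]
              refine h1.trans ?_
              calc ε (k + 1) * ‖z k‖ * ‖w k‖ = ε (k + 1) * (‖z k‖ * ‖w k‖) := by ring
                _ ≤ ε (k + 1) * M := mul_le_mul_of_nonneg_left
                    (mul_le_mul (hnormz k) (hnormw k) (norm_nonneg _) (norm_nonneg _)) hεk
            · exact h2.trans (mul_le_mul_of_nonneg_left ih (by linarith))
        _ = ((P * (1 + ε (k + 1))) - 1) * M := by ring
        _ = ((∏ j ∈ Finset.Icc (p + 1) (k + 1), (1 + ε j)) - 1) * M := by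
            rw [Finset.prod_Icc_succ_top (by omega)]
  -- bound the products by exp of the tail
  have hPbound : ∀ k, (∏ j ∈ Finset.Icc (p + 1) k, (1 + ε j)) ≤ Real.exp (t p) := by
    intro k
    calc (∏ j ∈ Finset.Icc (p + 1) k, (1 + ε j))
        ≤ ∏ j ∈ Finset.Icc (p + 1) k, Real.exp (ε j) := by
          apply Finset.prod_le_prod
          · intro j hj
            have : 0 < ε j := hpos j (by simp at hj; omega)
            linarith
          · intro j _
            have := Real.add_one_le_exp (ε j)
            linarith
      _ = Real.exp (∑ j ∈ Finset.Icc (p + 1) k, ε j) := by rw [Real.exp_sum]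
      _ ≤ Real.exp (t p) := Real.exp_le_exp.2 (htail p k)
  have hkey2 : ∀ k, p ≤ k → ‖z k * w k - theta E T p x0 k‖ ≤ (Real.exp (t p) - 1) * M := by
    intro k hk
    refine (key k hk).trans ?_
    exact mul_le_mul_of_nonneg_right (by linarith [hPbound k]) hMnonneg
  have hexp1 : 1 ≤ Real.exp (t p) := Real.one_le_exp (htnonneg p)
  -- u is bounded
  have hubd : ∀ k, ‖u k‖ ≤ M + (Real.exp (t p) - 1) * M := by
    intro k
    simp only [hu]
    by_cases h : p ≤ k
    · rw [if_pos h]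
      calc ‖theta E T p x0 k‖
          ≤ ‖z k * w k‖ + ‖z k * w k - theta E T p x0 k‖ := by
            have := norm_sub_norm_le (z k * w k) (theta E T p x0 k)
            have := norm_sub_rev (z k * w k) (theta E T p x0 k)
            nlinarith [norm_sub_norm_le (theta E T p x0 k) (z k * w k),
              norm_sub_rev (theta E T p x0 k) (z k * w k)]
        _ ≤ M + (Real.exp (t p) - 1) * M := add_le_add (hnormzw k) (hkey2 k h)
    · rw [if_neg h]
      have : (0:ℝ) ≤ (Real.exp (t p) - 1) * M := mul_nonneg (by linarith) hMnonneg
      linarith [hnormzw k]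
  have humem : Memℓp u ∞ := memℓp_infty ⟨M + (Real.exp (t p) - 1) * M, by
    rintro - ⟨k, rfl⟩
    exact hubd k⟩
  set uLp : lp C ∞ := ⟨u, humem⟩ with huLp
  -- uLp is in ZSet p
  have huZ : uLp ∈ ZSet E T p := by
    rw [mem_zset_iff]
    have hcoe : ∀ k, uLp k = u k := fun k => rfl
    have huk : ∀ k, p ≤ k → uLp k = theta E T p x0 k := by
      intro k hk
      rw [hcoe]
      simp only [hu]
      rw [if_pos hk]
    refine ⟨fun k hk => ?_, fun k hk hE => ?_⟩
    · rw [huk k hk]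
      exact theta_mem E T p x0 hk
    · rw [huk (k + 1) (hk.trans k.le_succ), theta_succ E T p x0 hk]
      exact Tcoe_congr E T (Subtype.ext (huk k hk).symm)
  refine ⟨uLp, Set.mem_iUnion.2 ⟨p, huZ⟩, ?_⟩
  rw [dist_eq_norm]
  have hnd : ‖z * w - uLp‖ ≤ (Real.exp (t p) - 1) * M := by
    apply lp.norm_le_of_forall_le (mul_nonneg (by linarith) hMnonneg)
    intro k
    have hcoord : (z * w - uLp) k = z k * w k - u k := rfl
    rw [hcoord]
    simp only [hu]
    by_cases h : p ≤ k
    · rw [if_pos h]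
      exact hkey2 k h
    · rw [if_neg h]
      simp [mul_nonneg (sub_nonneg.2 hexp1) hMnonneg]
  exact lt_of_le_of_lt hnd hp2

end Aux

/-- For an admissible inductive system, `Z` (the norm closure of
`⋃ n, Z_n` in `L = ℓ∞({C_k})`) is a closed self-adjoint subalgebra of `L`
(a C*-subalgebra) containing the ideal `c₀({C_k})`. -/
theorem ZAlg_isCStarSubalgebra (E : ∀ n, Submodule ℂ (C n)) (T : ∀ n, E n →ₗ[ℂ] E (n + 1))
    (ε : ℕ → ℝ) (hsys : IsAdmissibleSystem E T ε) :
    IsClosed (ZAlg E T) ∧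
    (0 : lp C ∞) ∈ ZAlg E T ∧
    (∀ a b, a ∈ ZAlg E T → b ∈ ZAlg E T → a + b ∈ ZAlg E T) ∧
    (∀ (c : ℂ) (a : lp C ∞), a ∈ ZAlg E T → c • a ∈ ZAlg E T) ∧
    (∀ a b, a ∈ ZAlg E T → b ∈ ZAlg E T → a * b ∈ ZAlg E T) ∧
    (∀ a, a ∈ ZAlg E T → star a ∈ ZAlg E T) ∧
    c0Set ⊆ ZAlg E T := by
  have hunion_add : ∀ a ∈ ⋃ m, ZSet E T m, ∀ b ∈ ⋃ m, ZSet E T m,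
      a + b ∈ ⋃ m, ZSet E T m := by
    intro a ha b hb
    obtain ⟨i, hi⟩ := Set.mem_iUnion.1 ha
    obtain ⟨j, hj⟩ := Set.mem_iUnion.1 hb
    exact Set.mem_iUnion.2 ⟨max i j, zset_add E T
      (zset_mono E T (le_max_left i j) hi) (zset_mono E T (le_max_right i j) hj)⟩
  refine ⟨isClosed_closure, ?_, ?_, ?_, ?_, ?_, ?_⟩
  · exact subset_closure (Set.mem_iUnion.2 ⟨0, zset_zero E T⟩)
  · intro a b ha hb
    exact map_mem_closure₂ continuous_add ha hb hunion_add
  · intro c a ha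
    refine map_mem_closure (continuous_const_smul c) ha ?_
    intro x hx
    obtain ⟨i, hi⟩ := Set.mem_iUnion.1 hx
    exact Set.mem_iUnion.2 ⟨i, zset_smul E T c hi⟩
  · intro a b ha hb
    have := map_mem_closure₂ (continuous_mul (M := lp C ∞)) ha hb
      (u := closure (⋃ m, ZSet E T m)) ?_
    · simpa [closure_closure, ZAlg] using this
    · intro x hx y hy
      obtain ⟨i, hi⟩ := Set.mem_iUnion.1 hx
      obtain ⟨j, hj⟩ := Set.mem_iUnion.1 hy
      exact zset_mul_mem_closure E T hsys
        (zset_mono E T (le_max_left i j) hi) (zset_mono E T (le_max_right i j) hj)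
  · intro a ha
    refine map_mem_closure continuous_star ha ?_
    intro x hx
    obtain ⟨i, hi⟩ := Set.mem_iUnion.1 hx
    exact Set.mem_iUnion.2 ⟨i, zset_star E T hsys.2.2.2.1 hsys.2.2.2.2.1 hi⟩
  · intro z hz
    rw [ZAlg, Metric.mem_closure_iff]
    intro δ hδ
    obtain ⟨n, hn⟩ := (Metric.tendsto_atTop.1 hz (δ / 2) (by linarith)).imp
      (fun n h => h)
    set u : ∀ k, C k := fun k => if k < n then z k else 0 with hu
    have hubd : ∀ k, ‖u k‖ ≤ ‖z‖ := by
      intro k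
      simp only [hu]
      by_cases h : k < n
      · rw [if_pos h]; exact lp.norm_apply_le_norm ENNReal.top_ne_zero z k
      · rw [if_neg h]; simp
    have humem : Memℓp u ∞ := memℓp_infty ⟨‖z‖, by rintro - ⟨k, rfl⟩; exact hubd k⟩
    set uLp : lp C ∞ := ⟨u, humem⟩ with huLp
    have huZ : uLp ∈ ZSet E T n := by
      rw [mem_zset_iff]
      have huk : ∀ k, n ≤ k → uLp k = 0 := by
        intro k hk
        show u k = 0
        simp only [hu]
        rw [if_neg (not_lt.2 hk)]
      refine ⟨fun k hk => by rw [huk k hk]; exact zero_mem _, fun k hk hE => ?_⟩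
      rw [huk (k + 1) (hk.trans k.le_succ),
        Tcoe_congr E T (show (⟨uLp k, hE⟩ : E k) = 0 from Subtype.ext (huk k hk)), map_zero]
      rfl
    refine ⟨uLp, Set.mem_iUnion.2 ⟨n, huZ⟩, ?_⟩
    rw [dist_eq_norm]
    have hle : ‖z - uLp‖ ≤ δ / 2 := by
      apply lp.norm_le_of_forall_le (by linarith)
      intro k
      have hcoord : (z - uLp) k = z k - u k := rfl
      rw [hcoord]
      simp only [hu]
      by_cases h : k < n
      · simp [if_pos h]
        linarith
      · rw [if_neg h, sub_zero]
        have := hn k (not_lt.1 h)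
        rw [Real.dist_eq, sub_zero] at this
        exact (le_abs_self _).trans this.le
    linarith

end
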